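/- Let m ≥ 1, let g be a symmetric invertible real m×m matrix with inverse entries g^{ab}, and let R_{abcd} ∈ ℝ (a,b,c,d ∈ Fin m) satisfy R_{abcd} = −R_{bacd}, R_{abcd} = −R_{abdc} and R_{abcd} = R_{cdab}. Define the Ricci tensor Ric_{bd} := Σ_{a,c} g^{ac} R_{abcd}, the scalar curvature R := Σ_{b,d} g^{bd} Ric_{bd}, the mixed Ricci tensor Ric^a_b := Σ_c g^{ac} Ric_{cb}, and the Einstein tensor G^a_b := Ric^a_b − ½ R δ^a_b. Then, for all a, b: R δ^a_b + Σ_{c,d,e,f} (g^{ad} δ^e_c − g^{ed} δ^a_c) g^{cf} R_{befd} = −2 G^a_b. -/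

import Mathlib

open Matrix

-- helper: swap arguments under a symmetric weight
lemma sumswap_aux {m : ℕ} (G : Fin m → Fin m → ℝ) (hG : ∀ i j, G i j = G j i)
    (F : Fin m → Fin m → ℝ) :
    ∑ c, ∑ f, G c f * F c f = ∑ c, ∑ f, G c f * F f c := by
  rw [Finset.sum_comm]
  exact Finset.sum_congr rfl fun x _ => Finset.sum_congr rfl fun y _ => by rw [hG]

/-- The algebraic identity underlying the computation that the canonical energy-tensor of the
metric-affine gravitational Lagrangian `ℒ = R √|g| d^m x` equals `−2 √|g|` times the Einstein
tensor: for a symmetric invertible `g` with inverse entries `g^{ab}` and Riemann components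
`R_{abcd}` with the usual symmetries, for all `a b`,
`R δ^a_b + Σ_{c,d,e,f} (g^{ad} δ^e_c − g^{ed} δ^a_c) g^{cf} R_{befd} = −2 G^a_b`. -/
theorem gravitational_energy_tensor_eq_neg_two_einstein
    (m : ℕ) (hm : 1 ≤ m)
    (g : Matrix (Fin m) (Fin m) ℝ) (hgsym : g.IsSymm) (hginv : IsUnit g.det)
    (R4 : Fin m → Fin m → Fin m → Fin m → ℝ)
    (h1 : ∀ a b c d, R4 a b c d = -R4 b a c d)
    (h2 : ∀ a b c d, R4 a b c d = -R4 a b d c)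
    (h3 : ∀ a b c d, R4 a b c d = R4 c d a b) :
    let gi : Matrix (Fin m) (Fin m) ℝ := g⁻¹
    -- Ricci tensor `Ric_{bd} = g^{ac} R_{abcd}`
    let Ric : Fin m → Fin m → ℝ := fun b d => ∑ a, ∑ c, gi a c * R4 a b c d
    -- scalar curvature `R = g^{bd} Ric_{bd}`
    let Rs : ℝ := ∑ b, ∑ d, gi b d * Ric b d
    -- mixed Ricci tensor `Ric^a_b = g^{ac} Ric_{cb}`
    let Ricm : Fin m → Fin m → ℝ := fun a b => ∑ c, gi a c * Ric c b
    -- Einstein tensor `G^a_b = Ric^a_b − ½ R δ^a_b`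
    let G : Fin m → Fin m → ℝ := fun a b => Ricm a b - (1 / 2) * Rs * (if a = b then 1 else 0)
    ∀ a b : Fin m,
      Rs * (if a = b then 1 else 0)
        + (∑ c, ∑ d, ∑ e, ∑ f,
            (gi a d * (if e = c then 1 else 0) - gi e d * (if a = c then 1 else 0))
              * gi c f * R4 b e f d)
      = -2 * G a b := by
  intro gi Ric Rs Ricm G a b
  have hgi : ∀ i j, gi i j = gi j i := by
    intro i j
    have h : giᵀ = gi := by
      show (g⁻¹)ᵀ = g⁻¹
      rw [Matrix.transpose_nonsing_inv, hgsym.eq]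
    calc gi i j = giᵀ j i := rfl
      _ = gi j i := by rw [h]
  have collapse : (∑ c, ∑ d, ∑ e, ∑ f,
      (gi a d * (if e = c then 1 else 0) - gi e d * (if a = c then 1 else 0))
        * gi c f * R4 b e f d) =
      (∑ c, ∑ d, ∑ f, gi a d * (gi c f * R4 b c f d))
      - (∑ d, ∑ e, ∑ f, gi e d * (gi a f * R4 b e f d)) := by
    simp [sub_mul, ite_mul, mul_ite, Finset.sum_sub_distrib, Finset.sum_ite_eq,
      Finset.sum_ite_eq', mul_assoc]
  have hd : ∀ d, (∑ c, ∑ f, gi c f * R4 b c f d) = -Ric d b := by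
    intro d
    rw [sumswap_aux gi hgi (fun c f => R4 b c f d)]
    have hpt : ∀ c f, R4 b f c d = -R4 c d f b := by
      intro c f
      rw [h3 c d f b, h1 f b c d]
      ring
    simp only [hpt, mul_neg, Finset.sum_neg_distrib]
    rfl
  have hS1 : (∑ c, ∑ d, ∑ f, gi a d * (gi c f * R4 b c f d)) = -Ricm a b := by
    rw [Finset.sum_comm]
    have : ∀ d, (∑ c, ∑ f, gi a d * (gi c f * R4 b c f d))
        = gi a d * (∑ c, ∑ f, gi c f * R4 b c f d) := by
      intro d
      rw [Finset.mul_sum]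
      exact Finset.sum_congr rfl fun c _ => by rw [Finset.mul_sum]
    simp only [this, hd, mul_neg]
    show (∑ x : Fin m, -(gi a x * Ric x b)) = -(∑ c, gi a c * Ric c b)
    rw [← Finset.sum_neg_distrib]
  have hf : ∀ f, (∑ d, ∑ e, gi e d * R4 b e f d) = Ric f b := by
    intro f
    have hpt : ∀ d e, gi e d * R4 b e f d = gi d e * R4 d f e b := by
      intro d e
      rw [hgi e d, h3 b e f d, h1 f d b e, h2 d f b e]
      ring
    simp only [hpt]
    rfl
  have hS2 : (∑ d, ∑ e, ∑ f, gi e d * (gi a f * R4 b e f d)) = Ricm a b := by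
    have step1 : (∑ d, ∑ e, ∑ f, gi e d * (gi a f * R4 b e f d))
        = ∑ f, ∑ d, ∑ e, gi a f * (gi e d * R4 b e f d) := by
      have s1 : ∀ d, (∑ e, ∑ f, gi e d * (gi a f * R4 b e f d))
          = ∑ f, ∑ e, gi a f * (gi e d * R4 b e f d) := by
        intro d
        rw [Finset.sum_comm]
        exact Finset.sum_congr rfl fun e _ => Finset.sum_congr rfl fun f _ => by ring
      simp only [s1]
      rw [Finset.sum_comm]
    rw [step1]
    have : ∀ f, (∑ d, ∑ e, gi a f * (gi e d * R4 b e f d))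
        = gi a f * (∑ d, ∑ e, gi e d * R4 b e f d) := by
      intro f
      rw [Finset.mul_sum]
      exact Finset.sum_congr rfl fun d _ => by rw [Finset.mul_sum]
    simp only [this, hf]
    rfl
  rw [collapse, hS1, hS2]
  show Rs * (if a = b then 1 else 0) + (-Ricm a b - Ricm a b)
      = -2 * (Ricm a b - (1 / 2) * Rs * (if a = b then 1 else 0))
  ring
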